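/- Let S be a numerical semigroup on a compound sequence, n ∈ S, and i ∈ [0,p]. Then there is exactly one factorization x of n that is i-normal, i.e., satisfying 0 ≤ x_j < b_{j+1} for all j < i and 0 ≤ x_j < a_j for all j > i. -/

import Mathlib

theorem stmt13 (p : ℕ) (hp : 1 ≤ p) (a b : ℕ → ℕ)
    (ha : ∀ i, 1 ≤ i → i ≤ p → 2 ≤ a i ∧ a i < b i)
    (hab : ∀ i j, 1 ≤ j → j ≤ i → i ≤ p → Nat.gcd (a i) (b j) = 1)
    (n : ℕ → ℕ)
    (hn : ∀ i, i ≤ p → n i = (∏ j ∈ Finset.Icc 1 i, b j) * ∏ j ∈ Finset.Icc (i+1) p, a j)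
    (N : ℕ) (hN : ∃ x : ℕ → ℕ, (∀ j, p < j → x j = 0) ∧
        ∑ j ∈ Finset.range (p+1), x j * n j = N)
    (i : ℕ) (hip : i ≤ p) :
    ∃! x : ℕ → ℕ, (∀ j, p < j → x j = 0) ∧
      (∑ j ∈ Finset.range (p+1), x j * n j = N) ∧
      (∀ j, j < i → x j < b (j+1)) ∧
      (∀ j, i < j → j ≤ p → x j < a j) := by
  classical
  set B : ℕ → ℕ := fun j => ∏ k ∈ Finset.Icc 1 j, b k with hB
  set A : ℕ → ℕ := fun j => ∏ k ∈ Finset.Icc j p, a k with hA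
  have hnBA : ∀ j, j ≤ p → n j = B j * A (j+1) := fun j hj => hn j hj
  have prod_bot : ∀ (f : ℕ → ℕ) (m : ℕ), m ≤ p →
      ∏ k ∈ Finset.Icc m p, f k = f m * ∏ k ∈ Finset.Icc (m+1) p, f k := by
    intro f m h
    have h2 : Finset.Icc m p = insert m (Finset.Icc (m+1) p) := by
      ext k; simp only [Finset.mem_Icc, Finset.mem_insert]; omega
    rw [h2, Finset.prod_insert (by simp only [Finset.mem_Icc]; omega)]
  have hA1 : ∀ j, j ≤ p → A j = a j * A (j+1) := fun j hj => prod_bot a j hj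
  have hB1 : ∀ j, B (j+1) = B j * b (j+1) := fun j => Finset.prod_Icc_succ_top (by omega) b
  have hapos : ∀ j, 1 ≤ j → j ≤ p → 0 < a j := fun j h1 h2 => by have := (ha j h1 h2).1; omega
  have hbpos : ∀ j, 1 ≤ j → j ≤ p → 0 < b j := fun j h1 h2 => by have := ha j h1 h2; omega
  have hApos : ∀ j, 1 ≤ j → 0 < A j := fun j hj =>
    Finset.prod_pos (fun k hk => hapos k (le_trans hj (Finset.mem_Icc.mp hk).1) (Finset.mem_Icc.mp hk).2)
  have hBpos : ∀ j, j ≤ p → 0 < B j := fun j hj =>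
    Finset.prod_pos (fun k hk => hbpos k (Finset.mem_Icc.mp hk).1
      (le_trans (Finset.mem_Icc.mp hk).2 hj))
  have hnpos : ∀ j, j ≤ p → 0 < n j := fun j hj => by
    rw [hnBA j hj]; exact Nat.mul_pos (hBpos j hj) (hApos (j+1) (by omega))
  have hkey : ∀ j, j < p → b (j+1) * n j = a (j+1) * n (j+1) := by
    intro j hj
    rw [hnBA j (by omega), hnBA (j+1) (by omega), hA1 (j+1) (by omega), hB1 j]
    ring
  have hdvd_high : ∀ k j, k < j → j ≤ p → A j ∣ n k := by
    intro k j hkj hjp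
    rw [hnBA k (by omega)]
    exact Dvd.dvd.mul_left
      (Finset.prod_dvd_prod_of_subset _ _ a (Finset.Icc_subset_Icc (by omega) le_rfl)) (B k)
  have hdvd_low : ∀ k j, j < k → k ≤ p → B (j+1) ∣ n k := by
    intro k j hjk hkp
    rw [hnBA k hkp]
    exact Dvd.dvd.mul_right
      (Finset.prod_dvd_prod_of_subset _ _ b (Finset.Icc_subset_Icc le_rfl (by omega))) (A (k+1))
  have hcop_high : ∀ j, 1 ≤ j → j ≤ p → Nat.Coprime (a j) (B j) := by
    intro j h1 h2
    exact Nat.Coprime.prod_right fun m hm =>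
      hab j m (Finset.mem_Icc.mp hm).1 (Finset.mem_Icc.mp hm).2 h2
  have hcop_low : ∀ j, j < p → Nat.Coprime (b (j+1)) (A (j+1)) := by
    intro j hj
    exact Nat.Coprime.prod_right fun m hm =>
      Nat.Coprime.symm (hab m (j+1) (by omega) (Finset.mem_Icc.mp hm).1 (Finset.mem_Icc.mp hm).2)
  -- ===== uniqueness =====
  have uniq : ∀ x y : ℕ → ℕ,
      ((∀ j, p < j → x j = 0) ∧ (∑ j ∈ Finset.range (p+1), x j * n j = N) ∧
        (∀ j, j < i → x j < b (j+1)) ∧ (∀ j, i < j → j ≤ p → x j < a j)) →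
      ((∀ j, p < j → y j = 0) ∧ (∑ j ∈ Finset.range (p+1), y j * n j = N) ∧
        (∀ j, j < i → y j < b (j+1)) ∧ (∀ j, i < j → j ≤ p → y j < a j)) →
      x = y := by
    rintro x y ⟨hxs, hxN, hxl, hxh⟩ ⟨hys, hyN, hyl, hyh⟩
    have hsum : ∑ k ∈ Finset.range (p+1), x k * n k = ∑ k ∈ Finset.range (p+1), y k * n k := by
      rw [hxN, hyN]
    have core_high : ∀ j, i < j → j ≤ p → (∀ k, j < k → k ≤ p → x k = y k) → x j = y j := by
      intro j hij hjp htail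
      have hsplit : ∀ z : ℕ → ℕ, ∑ k ∈ Finset.range (p+1), z k * n k
          = ∑ k ∈ Finset.range (j+1), z k * n k + ∑ k ∈ Finset.Ico (j+1) (p+1), z k * n k := by
        intro z
        rw [Finset.range_eq_Ico, Finset.range_eq_Ico]
        exact (Finset.sum_Ico_consecutive (f := fun k => z k * n k) (by omega : 0 ≤ j+1) (by omega : j+1 ≤ p+1)).symm
      have htaileq : ∑ k ∈ Finset.Ico (j+1) (p+1), x k * n k
          = ∑ k ∈ Finset.Ico (j+1) (p+1), y k * n k :=
        Finset.sum_congr rfl (fun k hk => by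
          have hk' := Finset.mem_Ico.mp hk
          rw [htail k (by omega) (by omega)])
      have hhead : ∑ k ∈ Finset.range (j+1), x k * n k
          = ∑ k ∈ Finset.range (j+1), y k * n k := by
        have h := hsum
        rw [hsplit x, hsplit y, htaileq] at h
        omega
      have hmod : ∀ z : ℕ → ℕ, ∑ k ∈ Finset.range (j+1), z k * n k ≡ z j * n j [MOD A j] := by
        intro z
        rw [Finset.sum_range_succ]
        have h0 : ∑ k ∈ Finset.range j, z k * n k ≡ 0 [MOD A j] :=
          (Nat.modEq_zero_iff_dvd).2 (Finset.dvd_sum fun k hk =>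
            Dvd.dvd.mul_left (hdvd_high k j (Finset.mem_range.mp hk) hjp) (z k))
        simpa using h0.add_right (z j * n j)
      have hm : x j * n j ≡ y j * n j [MOD A j] := by
        have h2 := hmod y
        rw [← hhead] at h2
        exact (hmod x).symm.trans h2
      have hm2 : (x j * B j) * A (j+1) ≡ (y j * B j) * A (j+1) [MOD a j * A (j+1)] := by
        have e1 : ∀ z : ℕ, z * n j = (z * B j) * A (j+1) := by
          intro z; rw [hnBA j hjp]; ring
        have e2 : A j = a j * A (j+1) := hA1 j hjp
        rw [← e1, ← e1, ← e2]
        exact hm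
      have hm3 : x j * B j ≡ y j * B j [MOD a j] :=
        Nat.ModEq.mul_right_cancel' (hApos (j+1) (by omega)).ne' hm2
      have hm4 : x j ≡ y j [MOD a j] :=
        Nat.ModEq.cancel_right_of_coprime (hcop_high j (by omega) hjp) hm3
      have h5 : x j % a j = y j % a j := hm4
      rwa [Nat.mod_eq_of_lt (hxh j hij hjp), Nat.mod_eq_of_lt (hyh j hij hjp)] at h5
    have high : ∀ t j, i < j → j ≤ p → p ≤ j + t → x j = y j := by
      intro t
      induction t with
      | zero => intro j h1 h2 h3; exact core_high j h1 h2 (fun k hk1 hk2 => by omega)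
      | succ t ih => intro j h1 h2 h3
                     exact core_high j h1 h2 (fun k hk1 hk2 => ih k (by omega) hk2 (by omega))
    have hxyhigh : ∀ k, i < k → x k = y k := by
      intro k hk
      by_cases hkp : k ≤ p
      · exact high p k hk hkp (by omega)
      · rw [hxs k (by omega), hys k (by omega)]
    have core_low : ∀ j, j < i → (∀ k, k < j → x k = y k) → x j = y j := by
      intro j hji hhead
      have hjp : j + 1 ≤ p := by omega
      have hsplit : ∀ z : ℕ → ℕ, ∑ k ∈ Finset.range (p+1), z k * n k
          = ∑ k ∈ Finset.Ico 0 j, z k * n k + ∑ k ∈ Finset.Ico j (p+1), z k * n k := by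
        intro z
        rw [Finset.range_eq_Ico]
        exact (Finset.sum_Ico_consecutive _ (by omega : 0 ≤ j) (by omega : j ≤ p+1)).symm
      have hheadeq : ∑ k ∈ Finset.Ico 0 j, x k * n k = ∑ k ∈ Finset.Ico 0 j, y k * n k :=
        Finset.sum_congr rfl (fun k hk => by
          have hk' := Finset.mem_Ico.mp hk
          rw [hhead k (by omega)])
      have htail : ∑ k ∈ Finset.Ico j (p+1), x k * n k
          = ∑ k ∈ Finset.Ico j (p+1), y k * n k := by
        have h := hsum
        rw [hsplit x, hsplit y, hheadeq] at h
        omega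
      have hmod : ∀ z : ℕ → ℕ, ∑ k ∈ Finset.Ico j (p+1), z k * n k ≡ z j * n j [MOD B (j+1)] := by
        intro z
        rw [Finset.sum_eq_sum_Ico_succ_bot (by omega : j < p+1)]
        have h0 : ∑ k ∈ Finset.Ico (j+1) (p+1), z k * n k ≡ 0 [MOD B (j+1)] :=
          (Nat.modEq_zero_iff_dvd).2 (Finset.dvd_sum fun k hk => by
            have hk' := Finset.mem_Ico.mp hk
            exact Dvd.dvd.mul_left (hdvd_low k j (by omega) (by omega)) (z k))
        simpa using h0.add_left (z j * n j)
      have hm : x j * n j ≡ y j * n j [MOD B (j+1)] := by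
        have h2 := hmod y
        rw [← htail] at h2
        exact (hmod x).symm.trans h2
      have hm2 : (x j * A (j+1)) * B j ≡ (y j * A (j+1)) * B j [MOD b (j+1) * B j] := by
        have e1 : ∀ z : ℕ, z * n j = (z * A (j+1)) * B j := by
          intro z; rw [hnBA j (by omega)]; ring
        have e2 : B (j+1) = b (j+1) * B j := by rw [hB1 j]; ring
        rw [← e1, ← e1, ← e2]
        exact hm
      have hm3 : x j * A (j+1) ≡ y j * A (j+1) [MOD b (j+1)] :=
        Nat.ModEq.mul_right_cancel' (hBpos j (by omega)).ne' hm2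
      have hm4 : x j ≡ y j [MOD b (j+1)] :=
        Nat.ModEq.cancel_right_of_coprime (hcop_low j (by omega)) hm3
      have h5 : x j % b (j+1) = y j % b (j+1) := hm4
      rwa [Nat.mod_eq_of_lt (hxl j hji), Nat.mod_eq_of_lt (hyl j hji)] at h5
    have low : ∀ j, j < i → x j = y j := by
      intro j
      induction j using Nat.strong_induction_on with
      | _ j ih =>
        intro hji
        exact core_low j hji (fun k hk => ih k hk (by omega))
    have hmid : x i = y i := by
      have hi1 : i ∈ Finset.range (p+1) := Finset.mem_range.mpr (by omega)
      have h1 := Finset.add_sum_erase (Finset.range (p+1)) (fun k => x k * n k) hi1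
      have h2 := Finset.add_sum_erase (Finset.range (p+1)) (fun k => y k * n k) hi1
      have h3 : ∑ k ∈ (Finset.range (p+1)).erase i, x k * n k
          = ∑ k ∈ (Finset.range (p+1)).erase i, y k * n k :=
        Finset.sum_congr rfl (fun k hk => by
          obtain ⟨hk1, hk2⟩ := Finset.mem_erase.mp hk
          rcases lt_trichotomy k i with h | h | h
          · rw [low k h]
          · exact absurd h hk1
          · rw [hxyhigh k h])
      have h4 : x i * n i = y i * n i := by
        omega
      exact Nat.eq_of_mul_eq_mul_right (hnpos i hip) h4
    funext k
    rcases lt_trichotomy k i with h | h | h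
    · exact low k h
    · rw [h]; exact hmid
    · exact hxyhigh k h
  -- ===== existence =====
  obtain ⟨x₀, hx₀s, hx₀N⟩ := hN
  set M : ℕ := (∑ j ∈ Finset.Icc 1 p, b j) + 1 with hM
  have hMb : ∀ j, 1 ≤ j → j ≤ p → b j < M := by
    intro j h1 h2
    have : b j ≤ ∑ j ∈ Finset.Icc 1 p, b j :=
      Finset.single_le_sum (fun k _ => Nat.zero_le _) (Finset.mem_Icc.mpr ⟨h1, h2⟩)
    omega
  have hM1 : 1 ≤ M := by omega
  set w : ℕ → ℕ := fun k => M ^ (if k ≤ i then i - k else k - i) with hw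
  -- generic trade sum
  have trade_sum : ∀ (x y : ℕ → ℕ) (u v c d : ℕ), u ≠ v → c ≤ x u →
      u ∈ Finset.range (p+1) → v ∈ Finset.range (p+1) →
      (∀ k, y k = if k = u then x u - c else if k = v then x v + d else x k) →
      ∀ g : ℕ → ℕ,
      ((∑ k ∈ Finset.range (p+1), y k * g k : ℕ) : ℤ)
        = (∑ k ∈ Finset.range (p+1), x k * g k : ℕ) + d * g v - c * g u := by
    intro x y u v c d huv hcx hu hv hy g
    have key : ∀ k, ((y k : ℤ)) = (x k : ℤ)
        + (if k = v then (d : ℤ) else 0) - (if k = u then (c : ℤ) else 0) := by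
      intro k
      rw [hy k]
      by_cases hku : k = u
      · subst hku
        rw [if_pos rfl, if_pos rfl, if_neg huv, Nat.cast_sub hcx]
        ring
      · by_cases hkv : k = v
        · subst hkv
          rw [if_neg hku, if_pos rfl, if_pos rfl, if_neg hku]
          push_cast
          ring
        · rw [if_neg hku, if_neg hkv, if_neg hkv, if_neg hku]
          ring
    push_cast
    calc ∑ k ∈ Finset.range (p+1), (y k : ℤ) * g k
        = ∑ k ∈ Finset.range (p+1), ((x k : ℤ) * g k
            + (if k = v then (d : ℤ) * g k else 0) - (if k = u then (c : ℤ) * g k else 0)) := by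
          refine Finset.sum_congr rfl (fun k _ => ?_)
          rw [key k]
          split_ifs <;> ring
      _ = ∑ k ∈ Finset.range (p+1), (x k : ℤ) * g k
            + ∑ k ∈ Finset.range (p+1), (if k = v then (d : ℤ) * g k else 0)
            - ∑ k ∈ Finset.range (p+1), (if k = u then (c : ℤ) * g k else 0) := by
          rw [Finset.sum_sub_distrib, Finset.sum_add_distrib]
      _ = ∑ k ∈ Finset.range (p+1), (x k : ℤ) * g k + (d : ℤ) * g v - (c : ℤ) * g u := by
          rw [Finset.sum_ite_eq' _ v, Finset.sum_ite_eq' _ u, if_pos hv, if_pos hu]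
  -- trading step
  have step : ∀ x : ℕ → ℕ, (∀ j, p < j → x j = 0) →
      ¬ ((∀ j, j < i → x j < b (j+1)) ∧ (∀ j, i < j → j ≤ p → x j < a j)) →
      ∃ y : ℕ → ℕ, (∀ j, p < j → y j = 0) ∧
        (∑ k ∈ Finset.range (p+1), y k * n k = ∑ k ∈ Finset.range (p+1), x k * n k) ∧
        (∑ k ∈ Finset.range (p+1), y k * w k < ∑ k ∈ Finset.range (p+1), x k * w k) := by
    intro x hxs hbad
    by_cases hP : ∀ j, j < i → x j < b (j+1)
    · -- high violation: some j with i < j ≤ p, a j ≤ x j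
      have hQ : ¬ ∀ j, i < j → j ≤ p → x j < a j := fun h => hbad ⟨hP, h⟩
      push_neg at hQ
      obtain ⟨j, hij, hjp, hax⟩ := hQ
      obtain ⟨j', rfl⟩ : ∃ j', j = j' + 1 := ⟨j - 1, by omega⟩
      refine ⟨fun k => if k = j' + 1 then x (j'+1) - a (j'+1) else if k = j' then x j' + b (j'+1) else x k,
        ?_, ?_, ?_⟩
      · intro k hk
        dsimp only
        rw [if_neg (by omega), if_neg (by omega)]
        exact hxs k hk
      · have h := trade_sum x _ (j'+1) j' (a (j'+1)) (b (j'+1)) (by omega) hax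
          (Finset.mem_range.mpr (by omega)) (Finset.mem_range.mpr (by omega)) (fun k => rfl) n
        have hk2 : (b (j'+1) : ℤ) * n j' = (a (j'+1) : ℤ) * n (j'+1) := by
          exact_mod_cast congrArg (Nat.cast : ℕ → ℤ) (hkey j' (by omega))
        have : ((∑ k ∈ Finset.range (p+1),
            (if k = j' + 1 then x (j'+1) - a (j'+1) else if k = j' then x j' + b (j'+1) else x k) * n k : ℕ) : ℤ)
            = ((∑ k ∈ Finset.range (p+1), x k * n k : ℕ) : ℤ) := by
          rw [h]; rw [hk2]; ring
        exact_mod_cast this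
      · have h := trade_sum x _ (j'+1) j' (a (j'+1)) (b (j'+1)) (by omega) hax
          (Finset.mem_range.mpr (by omega)) (Finset.mem_range.mpr (by omega)) (fun k => rfl) w
        have hwj' : w j' = M ^ (j' - i) := by
          simp only [hw]
          by_cases h' : j' ≤ i
          · have : j' = i ∨ j' < i := by omega
            rw [if_pos h']
            congr 1
            omega
          · rw [if_neg h']
        have hwj1 : w (j'+1) = M ^ ((j' - i) + 1) := by
          simp only [hw]
          rw [if_neg (by omega)]
          congr 1
          omega
        have hlt : b (j'+1) * w j' < a (j'+1) * w (j'+1) := by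
          rw [hwj', hwj1]
          have h1 : b (j'+1) < M := hMb (j'+1) (by omega) (by omega)
          have h2 : 2 ≤ a (j'+1) := (ha (j'+1) (by omega) (by omega)).1
          have hMe : 0 < M ^ (j' - i) := Nat.pow_pos (by omega)
          calc b (j'+1) * M ^ (j' - i) < M * M ^ (j' - i) := by
                exact (Nat.mul_lt_mul_right hMe).mpr h1
            _ = M ^ ((j' - i) + 1) := by ring
            _ ≤ a (j'+1) * M ^ ((j' - i) + 1) := Nat.le_mul_of_pos_left _ (by omega)
        have : ((∑ k ∈ Finset.range (p+1),
            (if k = j' + 1 then x (j'+1) - a (j'+1) else if k = j' then x j' + b (j'+1) else x k) * w k : ℕ) : ℤ)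
            < ((∑ k ∈ Finset.range (p+1), x k * w k : ℕ) : ℤ) := by
          rw [h]
          have : (b (j'+1) : ℤ) * w j' < (a (j'+1) : ℤ) * w (j'+1) := by exact_mod_cast hlt
          omega
        exact_mod_cast this
    · -- low violation: some j < i with b (j+1) ≤ x j
      push_neg at hP
      obtain ⟨j, hji, hbx⟩ := hP
      refine ⟨fun k => if k = j then x j - b (j+1) else if k = j + 1 then x (j+1) + a (j+1) else x k,
        ?_, ?_, ?_⟩
      · intro k hk
        dsimp only
        rw [if_neg (by omega), if_neg (by omega)]
        exact hxs k hk
      · have h := trade_sum x _ j (j+1) (b (j+1)) (a (j+1)) (by omega) hbx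
          (Finset.mem_range.mpr (by omega)) (Finset.mem_range.mpr (by omega)) (fun k => rfl) n
        have hk2 : (b (j+1) : ℤ) * n j = (a (j+1) : ℤ) * n (j+1) := by
          exact_mod_cast congrArg (Nat.cast : ℕ → ℤ) (hkey j (by omega))
        have : ((∑ k ∈ Finset.range (p+1),
            (if k = j then x j - b (j+1) else if k = j + 1 then x (j+1) + a (j+1) else x k) * n k : ℕ) : ℤ)
            = ((∑ k ∈ Finset.range (p+1), x k * n k : ℕ) : ℤ) := by
          rw [h, hk2]; ring
        exact_mod_cast this
      · have h := trade_sum x _ j (j+1) (b (j+1)) (a (j+1)) (by omega) hbx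
          (Finset.mem_range.mpr (by omega)) (Finset.mem_range.mpr (by omega)) (fun k => rfl) w
        have hwj : w j = M ^ ((i - (j+1)) + 1) := by
          simp only [hw]
          rw [if_pos (by omega)]
          congr 1
          omega
        have hwj1 : w (j+1) = M ^ (i - (j+1)) := by
          simp only [hw]
          rw [if_pos (by omega)]
        have hlt : a (j+1) * w (j+1) < b (j+1) * w j := by
          rw [hwj, hwj1]
          have h1 : a (j+1) < b (j+1) := (ha (j+1) (by omega) (by omega)).2
          have hMe : 0 < M ^ (i - (j+1)) := Nat.pow_pos (by omega)
          calc a (j+1) * M ^ (i - (j+1)) < b (j+1) * M ^ (i - (j+1)) :=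
                (Nat.mul_lt_mul_right hMe).mpr h1
            _ ≤ b (j+1) * M ^ ((i - (j+1)) + 1) := by
                refine Nat.mul_le_mul_left _ (Nat.pow_le_pow_right (by omega) (by omega))
        have : ((∑ k ∈ Finset.range (p+1),
            (if k = j then x j - b (j+1) else if k = j + 1 then x (j+1) + a (j+1) else x k) * w k : ℕ) : ℤ)
            < ((∑ k ∈ Finset.range (p+1), x k * w k : ℕ) : ℤ) := by
          rw [h]
          have : (a (j+1) : ℤ) * w (j+1) < (b (j+1) : ℤ) * w j := by exact_mod_cast hlt
          omega
        exact_mod_cast this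
  -- induction on potential
  have ex : ∀ m (x : ℕ → ℕ), (∀ j, p < j → x j = 0) →
      (∑ k ∈ Finset.range (p+1), x k * w k ≤ m) →
      ∃ y : ℕ → ℕ, (∀ j, p < j → y j = 0) ∧
        (∑ k ∈ Finset.range (p+1), y k * n k = ∑ k ∈ Finset.range (p+1), x k * n k) ∧
        (∀ j, j < i → y j < b (j+1)) ∧ (∀ j, i < j → j ≤ p → y j < a j) := by
    intro m
    induction m with
    | zero =>
      intro x hxs hΦ
      by_cases hnor : (∀ j, j < i → x j < b (j+1)) ∧ (∀ j, i < j → j ≤ p → x j < a j)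
      · exact ⟨x, hxs, rfl, hnor.1, hnor.2⟩
      · obtain ⟨y, _, _, hΦ'⟩ := step x hxs hnor
        omega
    | succ m ih =>
      intro x hxs hΦ
      by_cases hnor : (∀ j, j < i → x j < b (j+1)) ∧ (∀ j, i < j → j ≤ p → x j < a j)
      · exact ⟨x, hxs, rfl, hnor.1, hnor.2⟩
      · obtain ⟨y, hys, hyn, hΦ'⟩ := step x hxs hnor
        obtain ⟨z, hzs, hzn, hzl, hzh⟩ := ih y hys (by omega)
        exact ⟨z, hzs, by rw [hzn, hyn], hzl, hzh⟩
  obtain ⟨y, hys, hyn, hyl, hyh⟩ := ex (∑ k ∈ Finset.range (p+1), x₀ k * w k) x₀ hx₀s le_rfl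
  refine ⟨y, ⟨hys, by rw [hyn, hx₀N], hyl, hyh⟩, ?_⟩
  intro z hz
  exact uniq z y hz ⟨hys, by rw [hyn, hx₀N], hyl, hyh⟩
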